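/- Let k be a field of characteristic 0 and a,b ∈ k. The discriminant of the sextic polynomial f(X) = (X³ + aX² + bX + 1)(4X³ + b²X² + 2bX + 1) is nonzero if and only if (4a³ + 27 - 18ab - a²b² + 4b³)²·(b³ - 27) ≠ 0. -/

import Mathlib

open Polynomial

section SexticAux

variable {k : Type*} [Field k] [CharZero k]

private lemma sextic_dp (a b : k) :
    derivative (X ^ 3 + C a * X ^ 2 + C b * X + 1 : k[X]) = 3*X^2 + C a * (2*X) + C b := by
  simp [map_ofNat]; ring

private lemma sextic_dq (b : k) :
    derivative (4 * X ^ 3 + C (b ^ 2) * X ^ 2 + C (2 * b) * X + 1 : k[X])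
      = 12*X^2 + C (b^2) * (2*X) + C (2*b) := by
  simp [map_ofNat, derivative_pow]; ring

private lemma sextic_coprime_of_bezout {p q : k[X]} {D : k} (hD : D ≠ 0)
    {U V : k[X]} (h : U * p + V * q = C D) : IsCoprime p q := by
  refine ⟨C D⁻¹ * U, C D⁻¹ * V, ?_⟩
  have : C D⁻¹ * (U * p + V * q) = 1 := by
    rw [h, ← C_mul, inv_mul_cancel₀ hD, C_1]
  linear_combination this

private lemma sextic_sep_p (a b : k) (hG : 4*a^3 + 27 - 18*a*b - a^2*b^2 + 4*b^3 ≠ 0) :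
    (X ^ 3 + C a * X ^ 2 + C b * X + 1 : k[X]).Separable := by
  rw [Polynomial.Separable, sextic_dp]
  refine sextic_coprime_of_bezout hG (U := (27 - 15*(C a)*(C b) + 4*(C a)^3) + (6*(C a)^2 - 18*(C b))*X)
    (V := (4*(C b)^2 - 3*(C a) - (C a)^2*(C b)) + (-9 + 7*(C a)*(C b) - 2*(C a)^3)*X + (6*(C b) - 2*(C a)^2)*X^2) ?_
  simp only [map_add, map_sub, map_mul, map_pow, map_ofNat]
  ring

private lemma sextic_sep_q (b : k) (hb : b^3 - 27 ≠ 0) :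
    (4 * X ^ 3 + C (b ^ 2) * X ^ 2 + C (2 * b) * X + 1 : k[X]).Separable := by
  rw [Polynomial.Separable, sextic_dq]
  have hD : (1728 - 64*b^3 : k) ≠ 0 := by
    intro h; exact hb (by linear_combination (-1/64 : k) * h)
  refine sextic_coprime_of_bezout hD
    (U := (1728 - 480*(C b)^3 + 16*(C b)^6) + (-2304*(C b) + 96*(C b)^4)*X)
    (V := (208*(C b)^2 - 8*(C b)^5) + (-576 + 224*(C b)^3 - 8*(C b)^6)*X + (768*(C b) - 32*(C b)^4)*X^2) ?_
  simp only [map_add, map_sub, map_mul, map_pow, map_ofNat]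
  ring

private lemma sextic_cop_pq (a b : k) (hG : 4*a^3 + 27 - 18*a*b - a^2*b^2 + 4*b^3 ≠ 0) :
    IsCoprime (X ^ 3 + C a * X ^ 2 + C b * X + 1 : k[X])
      (4 * X ^ 3 + C (b ^ 2) * X ^ 2 + C (2 * b) * X + 1) := by
  refine sextic_coprime_of_bezout (neg_ne_zero.mpr hG)
    (U := (-36 - 12*(C b)^3 - (C b)^6 + 40*(C a)*(C b) + 7*(C a)*(C b)^4 - 12*(C a)^2*(C b)^2)
      + (24*(C b) - 3*(C b)^4 - (C b)^7 - 8*(C a)*(C b)^2 + 6*(C a)*(C b)^5 + 16*(C a)^2 - 8*(C a)^2*(C b)^3)*X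
      + (-28*(C b)^2 - 4*(C b)^5 + 48*(C a) + 24*(C a)*(C b)^3 - 32*(C a)^2*(C b))*X^2)
    (V := (9 + 8*(C b)^3 + (C b)^6 - 22*(C a)*(C b) - 7*(C a)*(C b)^4 + 13*(C a)^2*(C b)^2 - 4*(C a)^3)
      + (-6*(C b) - (C b)^4 + 12*(C a)*(C b)^2 + (C a)*(C b)^5 - 16*(C a)^2 - 6*(C a)^2*(C b)^3 + 8*(C a)^3*(C b))*X
      + (7*(C b)^2 + (C b)^5 - 12*(C a) - 6*(C a)*(C b)^3 + 8*(C a)^2*(C b))*X^2) ?_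
  simp only [map_add, map_sub, map_mul, map_pow, map_ofNat, map_neg]
  ring

private lemma sextic_nsf_p (a b : k) (hG : 4*a^3 + 27 - 18*a*b - a^2*b^2 + 4*b^3 = 0) :
    ¬ Squarefree (X ^ 3 + C a * X ^ 2 + C b * X + 1 : k[X]) := by
  by_cases hδ : 3*b - a^2 = 0
  · -- triple root case
    have ha3 : a^3 = 27 := by
      have h2 : (a^3 - 27)^2 = 0 := by
        linear_combination (27:k)*hG + (-36*b^2 + 162*a - 3*a^2*b - a^4)*hδ
      have h3 : a^3 - 27 = 0 := by
        exact pow_eq_zero_iff (two_ne_zero) |>.mp h2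
      linear_combination h3
    set s := a/3 with hs
    have has : a = 3*s := by rw [hs]; field_simp
    have hbs : b = 3*s^2 := by rw [hs]; field_simp; linear_combination hδ
    have hca : C a = 3*(C s) := by rw [has]; simp [map_ofNat]
    have hcb : C b = 3*(C s)^2 := by rw [hbs]; simp [map_ofNat]
    have hc1 : (1:k[X]) = (C s)^3 := by
      have h1s : (1:k) = s^3 := by rw [hs]; field_simp; linear_combination -ha3
      calc (1:k[X]) = C 1 := (map_one C).symm
        _ = C (s^3) := by rw [← h1s]
        _ = (C s)^3 := map_pow C s 3
    intro hsf
    have hu := hsf (X + C s) ⟨X + C s, by rw [hca, hcb]; linear_combination hc1⟩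
    exact Polynomial.not_isUnit_X_sub_C (-s) (by rwa [map_neg, sub_neg_eq_add])
  · -- double root case
    set r := (a*b - 9)/(2*(3*b - a^2)) with hr
    set w := -a - 2*r with hw'
    have h2δ : (2*(3*b - a^2) : k) ≠ 0 := mul_ne_zero two_ne_zero hδ
    have h1 : b = r^2 + 2*r*w := by
      rw [hw', hr]; field_simp [show b*3 - a^2 ≠ 0 from fun h => hδ (by linear_combination h)]; ring_nf; linear_combination (9 : k)*hG
    have h2 : (1:k) = -(r^2*w) := by
      rw [hw', hr]; field_simp [show b*3 - a^2 ≠ 0 from fun h => hδ (by linear_combination h)]; ring_nf; linear_combination (27 - a^3:k)*hG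
    have hca : C a = -(2*(C r)) - C w := by
      rw [show a = -(2*r) - w from by rw [hw']; ring]
      simp [map_ofNat]
    have hcb : C b = (C r)^2 + 2*(C r)*(C w) := by rw [h1]; simp [map_ofNat]
    have hc1 : (1:k[X]) = -((C r)^2 * (C w)) := by
      calc (1:k[X]) = C 1 := (map_one C).symm
        _ = C (-(r^2*w)) := by rw [← h2]
        _ = -((C r)^2 * (C w)) := by simp
    intro hsf
    have hu := hsf (X - C r) ⟨X - C w, by rw [hca, hcb]; linear_combination hc1⟩
    exact Polynomial.not_isUnit_X_sub_C r hu

private lemma sextic_nsf_q (b : k) (hb : b^3 = 27) :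
    ¬ Squarefree (4 * X ^ 3 + C (b ^ 2) * X ^ 2 + C (2 * b) * X + 1 : k[X]) := by
  have hb0 : b ≠ 0 := by
    intro h; rw [h] at hb; norm_num at hb
  set c := b^2/9 with hc
  set d := 3/b with hd
  have h1 : b^2 = 8*c + d := by
    rw [hc, hd]; field_simp; linear_combination hb
  have h2 : 2*b = 4*c^2 + 2*c*d := by
    rw [hc, hd]; field_simp; linear_combination (-4:k)*hb
  have h3 : (1:k) = c^2*d := by
    rw [hc, hd]; field_simp; linear_combination (-3:k)*hb
  have hcb2 : C (b^2) = 8*(C c) + C d := by rw [h1]; simp [map_ofNat]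
  have hc2b : C (2*b) = 4*(C c)^2 + 2*(C c)*(C d) := by rw [h2]; simp [map_ofNat]
  have hc1 : (1:k[X]) = (C c)^2 * (C d) := by
    calc (1:k[X]) = C 1 := (map_one C).symm
      _ = C (c^2*d) := by rw [← h3]
      _ = (C c)^2 * (C d) := by simp
  intro hsf
  have hu := hsf (X + C c) ⟨4*X + C d, by rw [hcb2, hc2b]; linear_combination hc1⟩
  exact Polynomial.not_isUnit_X_sub_C (-c) (by rwa [map_neg, sub_neg_eq_add])

end SexticAux

/-- The discriminant of the sextic `(X³+aX²+bX+1)(4X³+b²X²+2bX+1)` is nonzero —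
equivalently (over an algebraically closed field of characteristic 0) the sextic
has no repeated roots, i.e. is squarefree — if and only if
`(4a³ + 27 - 18ab - a²b² + 4b³)²(b³ - 27) ≠ 0`. -/
theorem sextic_discriminant_nonzero_iff {k : Type*} [Field k] [IsAlgClosed k] [CharZero k]
    (a b : k) :
    Squarefree ((X ^ 3 + C a * X ^ 2 + C b * X + 1) *
        (4 * X ^ 3 + C (b ^ 2) * X ^ 2 + C (2 * b) * X + 1) : Polynomial k) ↔
      (4 * a ^ 3 + 27 - 18 * a * b - a ^ 2 * b ^ 2 + 4 * b ^ 3) ^ 2 * (b ^ 3 - 27) ≠ 0 := by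
  constructor
  · intro hsf hE
    rcases mul_eq_zero.mp hE with h | h
    · have hG : 4*a^3 + 27 - 18*a*b - a^2*b^2 + 4*b^3 = 0 :=
        pow_eq_zero_iff (two_ne_zero) |>.mp h
      exact sextic_nsf_p a b hG
        (Squarefree.squarefree_of_dvd (dvd_mul_right _ _) hsf)
    · have hb : b^3 = 27 := by linear_combination h
      exact sextic_nsf_q b hb
        (Squarefree.squarefree_of_dvd (dvd_mul_left _ _) hsf)
  · intro hE
    rcases mul_ne_zero_iff.mp hE with ⟨h1, h2⟩
    have hG : 4*a^3 + 27 - 18*a*b - a^2*b^2 + 4*b^3 ≠ 0 := by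
      intro h; exact h1 (by rw [show (4*a^3 + 27 - 18*a*b - a^2*b^2 + 4*b^3 : k) = 4 * a ^ 3 + 27 - 18 * a * b - a ^ 2 * b ^ 2 + 4 * b ^ 3 from by ring] at h; rw [h]; ring)
    exact ((sextic_sep_p a b hG).mul (sextic_sep_q b h2) (sextic_cop_pq a b hG)).squarefree
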